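/- If ∇f(u) ∈ A for all u ∈ H where A is a closed subspace with projector P_A, then for any u₁, u₂ with P_A u₁ = P_A u₂ we have ∇f(u₁) = ∇f(u₂). -/

import Mathlib

open RealInnerProductSpace

/-- Gradient equality: if `∇f(u) ∈ A` for all `u` and `P_A u₁ = P_A u₂`,
then `∇f(u₁) = ∇f(u₂)`. -/
theorem stmt6 {H : Type*} [NormedAddCommGroup H] [InnerProductSpace ℝ H]
    [CompleteSpace H]
    (f : H → ℝ) (hf : ContDiff ℝ 1 f)
    (A : Submodule ℝ H) [A.HasOrthogonalProjection]
    (hgrad : ∀ u : H, gradient f u ∈ A)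
    (u₁ u₂ : H) (hP : A.orthogonalProjectionOnto u₁ = A.orthogonalProjectionOnto u₂) :
    gradient f u₁ = gradient f u₂ := by
  have hdiff : Differentiable ℝ f := hf.differentiable one_ne_zero
  have hw : u₂ - u₁ ∈ Aᗮ := by
    have h1 : u₁ - (A.orthogonalProjectionOnto u₁ : H) ∈ Aᗮ := A.sub_starProjection_mem_orthogonal u₁
    have h2 : u₂ - (A.orthogonalProjectionOnto u₂ : H) ∈ Aᗮ := A.sub_starProjection_mem_orthogonal u₂
    have := Aᗮ.sub_mem h2 h1
    rw [hP] at this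
    simpa using this
  set w := u₂ - u₁ with hwdef
  -- f is constant in the direction w
  have hconst : ∀ x : H, f (x + w) = f x := by
    intro x
    have hφ : ∀ t : ℝ, HasDerivAt (fun t : ℝ => f (x + t • w)) 0 t := by
      intro t
      have hc : HasDerivAt (fun t : ℝ => x + t • w) w t := by
        simpa using ((hasDerivAt_id t).smul_const w).const_add x
      have hfd : HasFDerivAt f (fderiv ℝ f (x + t • w)) (x + t • w) :=
        (hdiff (x + t • w)).hasFDerivAt
      have := hfd.comp_hasDerivAt t hc
      have hzero : (fderiv ℝ f (x + t • w)) w = 0 := by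
        have hg : HasGradientAt f (gradient f (x + t • w)) (x + t • w) :=
          (hdiff (x + t • w)).hasGradientAt
        have hfd' := hg.hasFDerivAt
        have : fderiv ℝ f (x + t • w) =
            InnerProductSpace.toDual ℝ H (gradient f (x + t • w)) := hfd'.fderiv
        rw [this, InnerProductSpace.toDual_apply_apply]
        exact hw _ (hgrad _)
      rwa [hzero] at this
    have hdφ : Differentiable ℝ (fun t : ℝ => f (x + t • w)) :=
      fun t => (hφ t).differentiableAt
    have hd0 : ∀ t : ℝ, deriv (fun t : ℝ => f (x + t • w)) t = 0 :=
      fun t => (hφ t).deriv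
    have := is_const_of_deriv_eq_zero hdφ hd0 1 0
    simpa using this
  -- now transfer the gradient
  have hg2 : HasGradientAt f (gradient f u₂) u₂ := (hdiff u₂).hasGradientAt
  have hfd2 := hg2.hasFDerivAt
  have htr : HasFDerivAt (fun x : H => x + w) (ContinuousLinearMap.id ℝ H) u₁ := by
    simpa using (hasFDerivAt_id u₁).add_const w
  have hcomp : HasFDerivAt (fun x : H => f (x + w))
      (InnerProductSpace.toDual ℝ H (gradient f u₂)) u₁ := by
    have hu : u₁ + w = u₂ := by simp [hwdef]
    have hfd2' : HasFDerivAt f (InnerProductSpace.toDual ℝ H (gradient f u₂)) (u₁ + w) := by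
      rw [hu]; exact hfd2
    have hc := hfd2'.comp u₁ htr
    rw [ContinuousLinearMap.comp_id] at hc
    exact hc
  have heq : (fun x : H => f (x + w)) = f := funext fun x => hconst x
  rw [heq] at hcomp
  have : HasGradientAt f (gradient f u₂) u₁ :=
    (hasGradientAt_iff_hasFDerivAt).2 hcomp
  exact this.gradient
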